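/- Let A be an n×n real matrix with A^{m+1} = 0, let c ∈ ℝ, a ∈ ℝ with a ≠ 0, γ ∈ ℝ, and B = 𝟙𝟙ᵀ + c·A. Set p_j = Σ_{k=0}^{m} (c/a)^k·(A^k𝟙)_j for j = 1,…,n, and suppose −a + Σ_{j=1}^n p_j ≠ 0. Then the vector x with x_j = p_j·Γ, where Γ = γ/(−a + Σ_{j=1}^n p_j), satisfies B·x = γ·𝟙 + a·x. Moreover, if det(B − aI) ≠ 0 then necessarily −a + Σ_{j=1}^n p_j ≠ 0, so x is the unique solution of B·x = γ·𝟙 + a·x. -/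

import Mathlib

private lemma mulVec_finset_sum {n : ℕ} {ι : Type*} (M : Matrix (Fin n) (Fin n) ℝ)
    (s : Finset ι) (f : ι → Fin n → ℝ) :
    M.mulVec (∑ i ∈ s, f i) = ∑ i ∈ s, M.mulVec (f i) := by
  exact Matrix.mulVec_sum M s f

/-- DAG Lemma: the system `B·x = γ𝟙 + a·x`, `B = 𝟙𝟙ᵀ + c·A` with `A` nilpotent, is solved
by `x_j = p_j·Γ` with `p_j = Σ_k (c/a)^k (A^k 𝟙)_j` and `Γ = γ/(−a + Σ_j p_j)`;
if `det(B − aI) ≠ 0` then `−a + Σ_j p_j ≠ 0` and `x` is the unique solution. -/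
theorem stmt_10 (n m : ℕ) (A : Matrix (Fin n) (Fin n) ℝ) (hnil : A ^ (m + 1) = 0)
    (c a γ : ℝ) (ha : a ≠ 0)
    (B : Matrix (Fin n) (Fin n) ℝ)
    (hB : B = Matrix.of (fun _ _ => (1 : ℝ)) + c • A)
    (p : Fin n → ℝ)
    (hp : p = ∑ k ∈ Finset.range (m + 1), (c / a) ^ k • (A ^ k).mulVec (fun _ => (1 : ℝ)))
    (Γ : ℝ) (hΓ : Γ = γ / (-a + ∑ j, p j))
    (x : Fin n → ℝ) (hx : ∀ j, x j = p j * Γ) :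
    ((-a + ∑ j, p j ≠ 0) →
      B.mulVec x = γ • (fun _ => (1 : ℝ)) + a • x) ∧
    ((B - a • 1).det ≠ 0 →
      (-a + ∑ j, p j ≠ 0) ∧
      ∀ y : Fin n → ℝ, B.mulVec y = γ • (fun _ => (1 : ℝ)) + a • y → y = x) := by
  set u : Fin n → ℝ := fun _ => (1 : ℝ) with hu
  set g : ℕ → Fin n → ℝ := fun k => (a * (c / a) ^ k) • (A ^ k).mulVec u with hg
  have hca : a * (c / a) = c := mul_div_cancel₀ c ha
  have hap : a • p = ∑ k ∈ Finset.range (m + 1), g k := by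
    rw [hp, Finset.smul_sum]
    exact Finset.sum_congr rfl fun k _ => (smul_smul _ _ _)
  have hg0 : g 0 = a • u := by simp [hg]
  have hgm : g (m + 1) = 0 := by simp [hg, hnil]
  -- key identity : c • A.mulVec p = a • p - a • u
  have key : c • A.mulVec p = a • p - a • u := by
    have h1 : c • A.mulVec p = ∑ k ∈ Finset.range (m + 1), g (k + 1) := by
      rw [hp, mulVec_finset_sum, Finset.smul_sum]
      refine Finset.sum_congr rfl fun k _ => ?_
      rw [Matrix.mulVec_smul, smul_smul, Matrix.mulVec_mulVec, ← pow_succ', hg]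
      congr 1
      field_simp
      rw [pow_succ', ← mul_assoc, hca]
    have h2 : ∑ k ∈ Finset.range (m + 1), g (k + 1)
        = ∑ k ∈ Finset.range (m + 2), g k - g 0 := by
      rw [Finset.sum_range_succ' (fun k => g k) (m + 1)]
      abel
    rw [h1, h2, Finset.sum_range_succ, hgm, add_zero, ← hap, hg0]
  -- the all-ones block acts as (sum of entries) • u
  have hones : ∀ v : Fin n → ℝ,
      (Matrix.of (fun _ _ => (1 : ℝ))).mulVec v = (∑ j, v j) • u := by
    intro v
    funext i
    simp [Matrix.mulVec, dotProduct, hu]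
  have hxΓ : x = Γ • p := by funext j; rw [hx]; simp [mul_comm]
  -- B.mulVec p = (Σp) • u + a • p - a • u
  have hBp : B.mulVec p = (∑ j, p j) • u + (a • p - a • u) := by
    rw [hB, Matrix.add_mulVec, hones, Matrix.smul_mulVec, key]
  have solves : (-a + ∑ j, p j ≠ 0) →
      B.mulVec x = γ • (fun _ => (1 : ℝ)) + a • x := by
    intro hne
    have hΓγ : Γ * (-a + ∑ j, p j) = γ := by
      rw [hΓ, div_mul_cancel₀ _ hne]
    rw [hxΓ, Matrix.mulVec_smul, hBp]
    funext i
    have := congrArg (fun t => t) hΓγ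
    simp only [Pi.add_apply, Pi.smul_apply, Pi.sub_apply, smul_eq_mul, hu]
    have hxi : x i = Γ * p i := by rw [hx]; ring
    rw [← hΓγ, ← hxi, hx i]
    ring
  refine ⟨solves, fun hdet => ?_⟩
  have hunit : IsUnit (B - a • (1 : Matrix (Fin n) (Fin n) ℝ)) :=
    (Matrix.isUnit_iff_isUnit_det _).2 (isUnit_iff_ne_zero.2 hdet)
  have hinj : Function.Injective (B - a • (1 : Matrix (Fin n) (Fin n) ℝ)).mulVec :=
    Matrix.mulVec_injective_iff_isUnit.2 hunit
  have hsub : ∀ v : Fin n → ℝ,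
      (B - a • (1 : Matrix (Fin n) (Fin n) ℝ)).mulVec v = B.mulVec v - a • v := by
    intro v
    rw [Matrix.sub_mulVec, Matrix.smul_mulVec, Matrix.one_mulVec]
  have hne : -a + ∑ j, p j ≠ 0 := by
    intro h0
    have hsum : (∑ j, p j) = a := by linarith [h0]
    have hBp' : (B - a • (1 : Matrix (Fin n) (Fin n) ℝ)).mulVec p
        = (B - a • (1 : Matrix (Fin n) (Fin n) ℝ)).mulVec 0 := by
      rw [Matrix.mulVec_zero, hsub, hBp, hsum]
      funext i
      simp
    have hp0 : p = 0 := hinj hBp'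
    rw [hp0] at hsum
    simp at hsum
    exact ha hsum.symm
  refine ⟨hne, fun y hy => ?_⟩
  have hxs := solves hne
  apply hinj
  rw [hsub, hsub, hy, hxs]
  funext i
  simp [hu]
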